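/- Let ν ∈ ℝ. For every t ∈ ℝ, lim_{s→0, s≠0} [ G^B_{n_x n_x n_y} + ν G^B_{τ_x τ_x n_y} ](γ(t), γ(t+s)) = (3ν − 1)κ(t)/(8π). Here, with r = x − γ(s′), n_x = n(t), τ_x = τ(t), n_y = n(s′): G^B_{n_x n_x n_y}(x, γ(s′)) = −(1/(2π))(r·n_x)(n_x·n_y)/‖r‖² + (1/(2π))(r·n_y)(r·n_x)²/‖r‖⁴ − (1/(4π))(r·n_y)/‖r‖², and G^B_{τ_x τ_x n_y}(x, γ(s′)) = −(1/(2π))(r·τ_x)(τ_x·n_y)/‖r‖² + (1/(2π))(r·n_y)(r·τ_x)²/‖r‖⁴ − (1/(4π))(r·n_y)/‖r‖², evaluated at x = γ(t). -/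

import Mathlib

open Real Filter Topology MeasureTheory

noncomputable section

/-- Euclidean dot product on `ℝ × ℝ`. -/
def dot2 (v w : ℝ × ℝ) : ℝ := v.1 * w.1 + v.2 * w.2

/-- Unit tangent vector `τ(s) = γ′(s)`. -/
def tang (γ : ℝ → ℝ × ℝ) (s : ℝ) : ℝ × ℝ := deriv γ s

/-- Unit normal vector `n(s) = (τ₂(s), −τ₁(s))`. -/
def nor (γ : ℝ → ℝ × ℝ) (s : ℝ) : ℝ × ℝ := ((deriv γ s).2, -(deriv γ s).1)

/-- Signed curvature `κ(s) = −γ″(s)·n(s)`. -/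
def curv (γ : ℝ → ℝ × ℝ) (s : ℝ) : ℝ := -(dot2 (deriv (deriv γ) s) (nor γ s))

/-- Explicit formula for `G^B_{n_x n_x n_y}(x, γ(s'))`, with `r = x − γ(s')`,
`n_x = n(t)`, `n_y = n(s')`. -/
def GB_nx_nx_ny (γ : ℝ → ℝ × ℝ) (t : ℝ) (x : ℝ × ℝ) (s' : ℝ) : ℝ :=
  -(1 / (2 * π)) * dot2 (x - γ s') (nor γ t) * dot2 (nor γ t) (nor γ s')
      / dot2 (x - γ s') (x - γ s')
    + 1 / (2 * π) * dot2 (x - γ s') (nor γ s') * (dot2 (x - γ s') (nor γ t)) ^ 2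
      / (dot2 (x - γ s') (x - γ s')) ^ 2
    - 1 / (4 * π) * dot2 (x - γ s') (nor γ s') / dot2 (x - γ s') (x - γ s')

/-- Explicit formula for `G^B_{τ_x τ_x n_y}(x, γ(s'))`, with `r = x − γ(s')`,
`τ_x = τ(t)`, `n_y = n(s')`. -/
def GB_tx_tx_ny (γ : ℝ → ℝ × ℝ) (t : ℝ) (x : ℝ × ℝ) (s' : ℝ) : ℝ :=
  -(1 / (2 * π)) * dot2 (x - γ s') (tang γ t) * dot2 (tang γ t) (nor γ s')
      / dot2 (x - γ s') (x - γ s')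
    + 1 / (2 * π) * dot2 (x - γ s') (nor γ s') * (dot2 (x - γ s') (tang γ t)) ^ 2
      / (dot2 (x - γ s') (x - γ s')) ^ 2
    - 1 / (4 * π) * dot2 (x - γ s') (nor γ s') / dot2 (x - γ s') (x - γ s')

lemma hdFst {f : ℝ → ℝ × ℝ} {v : ℝ × ℝ} {x : ℝ} (h : HasDerivAt f v x) :
    HasDerivAt (fun u => (f u).1) v.1 x := by simpa using (h.hasFDerivAt.fst).hasDerivAt

lemma hdSnd {f : ℝ → ℝ × ℝ} {v : ℝ × ℝ} {x : ℝ} (h : HasDerivAt f v x) :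
    HasDerivAt (fun u => (f u).2) v.2 x := by simpa using (h.hasFDerivAt.snd).hasDerivAt

lemma hasDerivAt_dot2 {f g : ℝ → ℝ × ℝ} {v w : ℝ × ℝ} {x : ℝ}
    (hf : HasDerivAt f v x) (hg : HasDerivAt g w x) :
    HasDerivAt (fun u => dot2 (f u) (g u)) (dot2 v (g x) + dot2 (f x) w) x := by
  have h := ((hdFst hf).mul (hdFst hg)).add ((hdSnd hf).mul (hdSnd hg))
  simp only [dot2]; exact h.congr_deriv (by ring)

lemma hasDerivAt_shift {F : ℝ → ℝ × ℝ} {v : ℝ × ℝ} {t s : ℝ} (h : HasDerivAt F v (t + s)) :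
    HasDerivAt (fun u => F (t + u)) v s := by
  have := h.scomp s ((hasDerivAt_id s).const_add t); rw [one_smul] at this; exact this

lemma lim1 {g : ℝ → ℝ} {c : ℝ} (hg0 : g 0 = 0) (hg : HasDerivAt g c 0) :
    Tendsto (fun s => g s / s) (𝓝[≠] (0:ℝ)) (𝓝 c) := by
  refine (hasDerivAt_iff_tendsto_slope.mp hg).congr' ?_
  filter_upwards [self_mem_nhdsWithin] with s hs
  simp [slope_def_field, hg0]

lemma lim2 {f g : ℝ → ℝ} {c : ℝ} (hf : ∀ s, HasDerivAt f (g s) s) (hf0 : f 0 = 0)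
    (hg0 : g 0 = 0) (hg : HasDerivAt g c 0) :
    Tendsto (fun s => f s / s ^ 2) (𝓝[≠] (0:ℝ)) (𝓝 (c / 2)) := by
  apply HasDerivAt.lhopital_zero_nhdsNE (f' := g) (g' := fun s => 2 * s)
  · exact Eventually.of_forall fun x => hf x
  · exact Eventually.of_forall fun x => by simpa using hasDerivAt_pow 2 x
  · filter_upwards [self_mem_nhdsWithin] with s hs
    simp only [Set.mem_compl_iff, Set.mem_singleton_iff] at hs
    simp [hs]
  · have : Tendsto f (𝓝 (0:ℝ)) (𝓝 (f 0)) := (hf 0).continuousAt.tendsto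
    rw [hf0] at this; exact this.mono_left nhdsWithin_le_nhds
  · have : Tendsto (fun x : ℝ => x ^ 2) (𝓝 0) (𝓝 (0:ℝ)) := by
      simpa using (continuous_pow 2).tendsto (0:ℝ)
    exact this.mono_left nhdsWithin_le_nhds
  · refine ((lim1 hg0 hg).div_const 2).congr' ?_
    filter_upwards [self_mem_nhdsWithin] with s hs
    rw [div_div, mul_comm]

set_option maxHeartbeats 1600000 in
theorem stmt6 (L : ℝ) (hL : 0 < L) (γ : ℝ → ℝ × ℝ)
    (hγ : ContDiff ℝ (⊤ : ℕ∞) γ)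
    (hper : ∀ s, γ (s + L) = γ s)
    (hinj : Set.InjOn γ (Set.Ico 0 L))
    (harc : ∀ s, dot2 (deriv γ s) (deriv γ s) = 1)
    (ν : ℝ) (t : ℝ) :
    Tendsto
      (fun s : ℝ => GB_nx_nx_ny γ t (γ t) (t + s) + ν * GB_tx_tx_ny γ t (γ t) (t + s))
      (𝓝[≠] (0 : ℝ)) (𝓝 ((3 * ν - 1) * curv γ t / (8 * π))) := by
  have hπ : (π:ℝ) ≠ 0 := Real.pi_ne_zero
  have h1 := contDiff_infty_iff_deriv.mp hγ
  have h2 := contDiff_infty_iff_deriv.mp h1.2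
  have h3 := contDiff_infty_iff_deriv.mp h2.2
  have hdg : ∀ u, HasDerivAt γ (deriv γ u) u := fun u => (h1.1 u).hasDerivAt
  have hdg1 : ∀ u, HasDerivAt (deriv γ) (deriv (deriv γ) u) u := fun u => (h2.1 u).hasDerivAt
  have hdg2 : ∀ u, HasDerivAt (deriv (deriv γ)) (deriv (deriv (deriv γ)) u) u :=
    fun u => (h3.1 u).hasDerivAt
  have hR : ∀ s, HasDerivAt (fun u => γ t - γ (t + u)) (-(deriv γ (t + s))) s :=
    fun s => (hasDerivAt_shift (hdg (t + s))).const_sub (γ t)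
  have hG1 : ∀ s, HasDerivAt (fun u => -(deriv γ (t + u))) (-(deriv (deriv γ) (t + s))) s :=
    fun s => (hasDerivAt_shift (hdg1 (t + s))).neg
  have hN : ∀ s, HasDerivAt (fun u => nor γ (t + u))
      ((deriv (deriv γ) (t + s)).2, -(deriv (deriv γ) (t + s)).1) s := fun s =>
    HasDerivAt.prodMk (hdSnd (hasDerivAt_shift (hdg1 (t + s))))
      ((hdFst (hasDerivAt_shift (hdg1 (t + s)))).neg)
  have hN2 : ∀ s, HasDerivAt
      (fun u => ((deriv (deriv γ) (t + u)).2, -(deriv (deriv γ) (t + u)).1))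
      ((deriv (deriv (deriv γ)) (t + s)).2, -(deriv (deriv (deriv γ)) (t + s)).1) s := fun s =>
    HasDerivAt.prodMk (hdSnd (hasDerivAt_shift (hdg2 (t + s))))
      ((hdFst (hasDerivAt_shift (hdg2 (t + s)))).neg)
  -- limit a : A s / s^2 → curv/2
  have hA : ∀ s, HasDerivAt (fun u => dot2 (γ t - γ (t + u)) (nor γ t))
      (dot2 (-(deriv γ (t + s))) (nor γ t)) s := by
    intro s
    have := hasDerivAt_dot2 (hR s) (hasDerivAt_const s (nor γ t))
    simpa [dot2] using this
  have hA' : HasDerivAt (fun s => dot2 (-(deriv γ (t + s))) (nor γ t))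
      (dot2 (-(deriv (deriv γ) t)) (nor γ t)) 0 := by
    have := hasDerivAt_dot2 (hG1 0) (hasDerivAt_const 0 (nor γ t))
    simpa [dot2] using this
  have la : Tendsto (fun s => dot2 (γ t - γ (t + s)) (nor γ t) / s ^ 2) (𝓝[≠] (0:ℝ))
      (𝓝 (curv γ t / 2)) := by
    have hc : dot2 (-(deriv (deriv γ) t)) (nor γ t) = curv γ t := by
      simp [dot2, nor, curv]; ring
    rw [← hc]
    refine lim2 hA ?_ ?_ hA'
    · simp [dot2]
    · simp [dot2, nor]; ring
  -- limit b : B s / s → -1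
  have lb : Tendsto (fun s => dot2 (γ t - γ (t + s)) (tang γ t) / s) (𝓝[≠] (0:ℝ))
      (𝓝 (-1 : ℝ)) := by
    have hB : HasDerivAt (fun u => dot2 (γ t - γ (t + u)) (tang γ t))
        (dot2 (-(deriv γ t)) (tang γ t)) 0 := by
      have := hasDerivAt_dot2 (hR 0) (hasDerivAt_const 0 (tang γ t))
      simpa [dot2] using this
    have hc : dot2 (-(deriv γ t)) (tang γ t) = -1 := by
      have h := harc t
      simp only [dot2, tang] at h ⊢
      simp only [Prod.fst_neg, Prod.snd_neg]
      nlinarith [h]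
    rw [← hc]
    refine lim1 ?_ hB
    simp [dot2]
  -- limit T : T s / s → curv
  have ltt : Tendsto (fun s => dot2 (tang γ t) (nor γ (t + s)) / s) (𝓝[≠] (0:ℝ))
      (𝓝 (curv γ t)) := by
    have hT : HasDerivAt (fun u => dot2 (tang γ t) (nor γ (t + u)))
        (dot2 (tang γ t) ((deriv (deriv γ) t).2, -(deriv (deriv γ) t).1)) 0 := by
      have := hasDerivAt_dot2 (hasDerivAt_const 0 (tang γ t)) (hN 0)
      simpa [dot2] using this
    have hc : dot2 (tang γ t) ((deriv (deriv γ) t).2, -(deriv (deriv γ) t).1) = curv γ t := by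
      simp [dot2, tang, nor, curv]; ring
    rw [← hc]
    refine lim1 ?_ hT
    simp [dot2, tang, nor]; ring
  -- limit d : D s / s^2 → -curv/2
  have hD : ∀ s, HasDerivAt (fun u => dot2 (γ t - γ (t + u)) (nor γ (t + u)))
      (dot2 (-(deriv γ (t + s))) (nor γ (t + s))
        + dot2 (γ t - γ (t + s)) ((deriv (deriv γ) (t + s)).2, -(deriv (deriv γ) (t + s)).1)) s :=
    fun s => hasDerivAt_dot2 (hR s) (hN s)
  have hD' : HasDerivAt (fun s => dot2 (-(deriv γ (t + s))) (nor γ (t + s))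
        + dot2 (γ t - γ (t + s)) ((deriv (deriv γ) (t + s)).2, -(deriv (deriv γ) (t + s)).1))
      ((dot2 (-(deriv (deriv γ) (t + 0))) (nor γ (t + 0))
        + dot2 (-(deriv γ (t + 0)))
            ((deriv (deriv γ) (t + 0)).2, -(deriv (deriv γ) (t + 0)).1))
       + (dot2 (-(deriv γ (t + 0)))
            ((deriv (deriv γ) (t + 0)).2, -(deriv (deriv γ) (t + 0)).1)
        + dot2 (γ t - γ (t + 0))
            ((deriv (deriv (deriv γ)) (t + 0)).2, -(deriv (deriv (deriv γ)) (t + 0)).1))) 0 :=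
    (hasDerivAt_dot2 (hG1 0) (hN 0)).add (hasDerivAt_dot2 (hR 0) (hN2 0))
  have ld : Tendsto (fun s => dot2 (γ t - γ (t + s)) (nor γ (t + s)) / s ^ 2) (𝓝[≠] (0:ℝ))
      (𝓝 (-(curv γ t) / 2)) := by
    have hc : (dot2 (-(deriv (deriv γ) (t + 0))) (nor γ (t + 0))
        + dot2 (-(deriv γ (t + 0)))
            ((deriv (deriv γ) (t + 0)).2, -(deriv (deriv γ) (t + 0)).1))
       + (dot2 (-(deriv γ (t + 0)))
            ((deriv (deriv γ) (t + 0)).2, -(deriv (deriv γ) (t + 0)).1)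
        + dot2 (γ t - γ (t + 0))
            ((deriv (deriv (deriv γ)) (t + 0)).2, -(deriv (deriv (deriv γ)) (t + 0)).1))
        = -(curv γ t) := by
      simp [dot2, nor, curv]; ring
    rw [← hc]
    refine lim2 hD ?_ ?_ hD'
    · simp [dot2]
    · simp [dot2, nor]; ring
  -- limit e : E s → 1
  have le1 : Tendsto (fun s => dot2 (nor γ t) (nor γ (t + s))) (𝓝[≠] (0:ℝ)) (𝓝 1) := by
    have hcont := (hasDerivAt_dot2 (hasDerivAt_const 0 (nor γ t)) (hN 0)).continuousAt
    have h0 : dot2 (nor γ t) (nor γ (t + 0)) = 1 := by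
      have h := harc t
      simp only [dot2, nor, add_zero] at h ⊢
      nlinarith [h]
    have h := hcont.tendsto
    rw [h0] at h
    exact h.mono_left nhdsWithin_le_nhds
  -- s^2 → 0
  have ls2 : Tendsto (fun s : ℝ => s ^ 2) (𝓝[≠] (0:ℝ)) (𝓝 0) := by
    have h : Tendsto (fun s : ℝ => s ^ 2) (𝓝 0) (𝓝 (0:ℝ)) := by
      simpa using (continuous_pow 2).tendsto (0:ℝ)
    exact h.mono_left nhdsWithin_le_nhds
  -- limit c : C s / s^2 → 1
  have hCid : ∀ s, dot2 (γ t - γ (t + s)) (γ t - γ (t + s))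
      = (dot2 (γ t - γ (t + s)) (tang γ t)) ^ 2 + (dot2 (γ t - γ (t + s)) (nor γ t)) ^ 2 := by
    intro s
    have h := harc t
    simp only [dot2, tang, nor] at h ⊢
    linear_combination (-((γ t - γ (t + s)).1 ^ 2) - (γ t - γ (t + s)).2 ^ 2) * h
  have lc : Tendsto (fun s => dot2 (γ t - γ (t + s)) (γ t - γ (t + s)) / s ^ 2) (𝓝[≠] (0:ℝ))
      (𝓝 1) := by
    have base := (lb.pow 2).add ((la.pow 2).mul ls2)
    have h1 : ((-1:ℝ)) ^ 2 + (curv γ t / 2) ^ 2 * 0 = 1 := by norm_num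
    rw [h1] at base
    refine base.congr' ?_
    filter_upwards [self_mem_nhdsWithin] with s hs
    have hs' : s ≠ 0 := hs
    rw [hCid s]
    field_simp
  -- assemble
  have T1 := ((la.const_mul (-(1/(2*π)))).mul le1).div lc one_ne_zero
  have T2 := (((ld.const_mul (1/(2*π))).mul (la.pow 2)).div (lc.pow 2) (by norm_num)).mul ls2
  have T3 := (ld.const_mul (1/(4*π))).div lc one_ne_zero
  have U1 := ((lb.const_mul (-(1/(2*π)))).mul ltt).div lc one_ne_zero
  have U2 := ((ld.const_mul (1/(2*π))).mul (lb.pow 2)).div (lc.pow 2) (by norm_num)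
  have big := ((T1.add T2).sub T3).add (((U1.add U2).sub T3).const_mul ν)
  have hval : -(1 / (2 * π)) * (curv γ t / 2) * 1 / 1
        + 1 / (2 * π) * (-curv γ t / 2) * (curv γ t / 2) ^ 2 / 1 ^ 2 * 0
        - 1 / (4 * π) * (-curv γ t / 2) / 1
        + ν * (-(1 / (2 * π)) * -1 * curv γ t / 1
            + 1 / (2 * π) * (-curv γ t / 2) * (-1 : ℝ) ^ 2 / 1 ^ 2
            - 1 / (4 * π) * (-curv γ t / 2) / 1)
      = (3 * ν - 1) * curv γ t / (8 * π) := by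
    field_simp
    ring
  rw [hval] at big
  refine big.congr' ?_
  filter_upwards [self_mem_nhdsWithin] with s hs
  have hs' : s ≠ 0 := hs
  simp only [Pi.div_apply, GB_nx_nx_ny, GB_tx_tx_ny]
  by_cases hC : dot2 (γ t - γ (t + s)) (γ t - γ (t + s)) = 0
  · rw [hC]
    norm_num
  · field_simp
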